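/- For a normalized antisymmetric N-body state Ψ confined to a cube Q₀ (i.e. Ψ ∈ H¹ with support in Q₀^N, each particle subject to the local exclusion bound T^Q[Ψ] ≥ (π²/|Q|^{2/d})(∫_Q ϱ_Ψ − q)), partitioning Q₀ into M^d equal subcubes yields the bound T[Ψ] ≥ (π²/|Q₀|^{2/d})(N M² − q M^{d+2}) for every M ∈ ℕ; consequently the fermionic ground-state kinetic energy satisfies E₀ ≥ c_d π² q^{-2/d} N^{1+2/d} / |Q₀|^{2/d} with c_d = (d/(d+2))(2/(d+2))^{2/d} (up to adjusting for the integer rounding of the optimal M). -/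

import Mathlib

open MeasureTheory

/-- A half-open `d`-cube in `ℝ^d` with lower corner `c` and side `ℓ`. -/
def hCube {d : ℕ} (c : EuclideanSpace ℝ (Fin d)) (ℓ : ℝ) :
    Set (EuclideanSpace ℝ (Fin d)) :=
  {y | ∀ i, y i ∈ Set.Ico (c i) (c i + ℓ)}

/-- The gradient of `Ψ` with respect to the `j`-th particle coordinate. -/
noncomputable def gradPart {d N : ℕ}
    (Ψ : (Fin N → EuclideanSpace ℝ (Fin d)) → ℝ)
    (x : Fin N → EuclideanSpace ℝ (Fin d)) (j : Fin N) :
    EuclideanSpace ℝ (Fin d) →L[ℝ] ℝ :=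
  fderiv ℝ (fun y => Ψ (Function.update x j y)) (x j)

/-- The local kinetic energy `T^Q[Ψ]` on the cube with corner `c`, side `ℓ`. -/
noncomputable def localKinetic {d N : ℕ}
    (Ψ : (Fin N → EuclideanSpace ℝ (Fin d)) → ℝ)
    (c : EuclideanSpace ℝ (Fin d)) (ℓ : ℝ) : ℝ :=
  ∑ j : Fin N, ∫ x, ‖gradPart Ψ x j‖ ^ 2 *
    Set.indicator (hCube c ℓ) (fun _ => (1 : ℝ)) (x j)

/-- The local mass `∫_Q ϱ_Ψ` on the cube with corner `c`, side `ℓ`. -/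
noncomputable def localMass {d N : ℕ}
    (Ψ : (Fin N → EuclideanSpace ℝ (Fin d)) → ℝ)
    (c : EuclideanSpace ℝ (Fin d)) (ℓ : ℝ) : ℝ :=
  ∑ j : Fin N, ∫ x, (Ψ x) ^ 2 *
    Set.indicator (hCube c ℓ) (fun _ => (1 : ℝ)) (x j)

lemma fermi_oneD_iff (a ℓ t : ℝ) (hℓ : 0 < ℓ) {M : ℕ} (m : Fin M) :
    t ∈ Set.Ico (a + m * ℓ) (a + m * ℓ + ℓ) ↔ ⌊(t - a) / ℓ⌋ = (m : ℤ) := by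
  rw [Int.floor_eq_iff, Set.mem_Ico]
  rw [le_div_iff₀ hℓ, div_lt_iff₀ hℓ]
  push_cast
  constructor
  · rintro ⟨h1, h2⟩; constructor <;> nlinarith
  · rintro ⟨h1, h2⟩; constructor <;> nlinarith

lemma fermi_oneD_le (a ℓ t : ℝ) (hℓ : 0 < ℓ) (M : ℕ) :
    ∑ m : Fin M, (if t ∈ Set.Ico (a + m * ℓ) (a + m * ℓ + ℓ) then (1:ℝ) else 0) ≤ 1 := by
  classical
  have h : ∀ m : Fin M, (if t ∈ Set.Ico (a + m * ℓ) (a + m * ℓ + ℓ) then (1:ℝ) else 0)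
      = if ⌊(t - a) / ℓ⌋ = (m : ℤ) then (1:ℝ) else 0 := fun m => by
    simp only [fermi_oneD_iff a ℓ t hℓ m]
  rw [Finset.sum_congr rfl (fun m _ => h m), Finset.sum_boole]
  have : (Finset.univ.filter (fun m : Fin M => ⌊(t - a) / ℓ⌋ = (m : ℤ))).card ≤ 1 := by
    apply Finset.card_le_one.mpr
    intro x hx y hy
    simp only [Finset.mem_filter] at hx hy
    have : (x : ℤ) = (y : ℤ) := hx.2 ▸ hy.2
    exact Fin.ext (by exact_mod_cast this)
  exact_mod_cast this

lemma fermi_oneD_eq (a ℓ t : ℝ) (hℓ : 0 < ℓ) (M : ℕ) (h1 : a ≤ t) (h2 : t < a + M * ℓ) :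
    ∑ m : Fin M, (if t ∈ Set.Ico (a + m * ℓ) (a + m * ℓ + ℓ) then (1:ℝ) else 0) = 1 := by
  classical
  have h : ∀ m : Fin M, (if t ∈ Set.Ico (a + m * ℓ) (a + m * ℓ + ℓ) then (1:ℝ) else 0)
      = if ⌊(t - a) / ℓ⌋ = (m : ℤ) then (1:ℝ) else 0 := fun m => by
    simp only [fermi_oneD_iff a ℓ t hℓ m]
  rw [Finset.sum_congr rfl (fun m _ => h m), Finset.sum_boole]
  have hge : (0:ℤ) ≤ ⌊(t - a) / ℓ⌋ := Int.floor_nonneg.mpr (div_nonneg (by linarith) hℓ.le)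
  have hlt : ⌊(t - a) / ℓ⌋ < (M : ℤ) := by
    have : (t - a) / ℓ < M := by rw [div_lt_iff₀ hℓ]; linarith
    exact_mod_cast Int.floor_lt.mpr (by exact_mod_cast this)
  set m₀ : Fin M := ⟨⌊(t - a) / ℓ⌋.toNat, by omega⟩ with hm₀
  have : (Finset.univ.filter (fun m : Fin M => ⌊(t - a) / ℓ⌋ = (m : ℤ))) = {m₀} := by
    ext m
    simp only [Finset.mem_filter, Finset.mem_singleton, Finset.mem_univ, true_and]
    constructor
    · intro hm; refine Fin.ext ?_
      have : (m₀ : ℤ) = (m : ℤ) := by simp [hm₀]; omega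
      exact_mod_cast this.symm
    · rintro rfl; simp [hm₀]; omega
  rw [this]; simp

lemma fermi_cube_ind_eq {d M : ℕ} (a : EuclideanSpace ℝ (Fin d)) (ℓ : ℝ) (k : Fin d → Fin M)
    (y : EuclideanSpace ℝ (Fin d)) :
    (hCube (WithLp.toLp 2 (fun i => a i + (k i : ℝ) * ℓ) : EuclideanSpace ℝ (Fin d)) ℓ).indicator
        (fun _ => (1:ℝ)) y
      = ∏ i, (if y i ∈ Set.Ico (a i + (k i : ℝ) * ℓ) (a i + (k i : ℝ) * ℓ + ℓ)
          then (1:ℝ) else 0) := by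
  classical
  rw [Set.indicator_apply]
  by_cases h : y ∈ hCube (WithLp.toLp 2 (fun i => a i + (k i : ℝ) * ℓ) : EuclideanSpace ℝ (Fin d)) ℓ
  · rw [if_pos h]
    exact (Finset.prod_eq_one (fun i _ => if_pos (h i))).symm
  · rw [if_neg h]
    have : ∃ i, ¬ (y i ∈ Set.Ico (a i + (k i : ℝ) * ℓ) (a i + (k i : ℝ) * ℓ + ℓ)) := by
      by_contra hc; push_neg at hc; exact h (fun i => hc i)
    obtain ⟨i, hi⟩ := this
    exact (Finset.prod_eq_zero (Finset.mem_univ i) (if_neg hi : _ = (0:ℝ))).symm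

lemma fermi_sum_prod_swap {d M : ℕ} (f : Fin d → Fin M → ℝ) :
    ∑ k : Fin d → Fin M, ∏ i, f i (k i) = ∏ i, ∑ m, f i m := by
  rw [Finset.prod_univ_sum, Fintype.piFinset_univ]

lemma fermi_hCube_measurable {d : ℕ} (c : EuclideanSpace ℝ (Fin d)) (ℓ : ℝ) :
    MeasurableSet (hCube c ℓ) := by
  have : hCube c ℓ = ⋂ i, (fun y : EuclideanSpace ℝ (Fin d) => y i) ⁻¹'
      (Set.Ico (c i) (c i + ℓ)) := by
    ext y; simp [hCube]
  rw [this]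
  exact MeasurableSet.iInter fun i => ((measurable_pi_apply i).comp (WithLp.measurable_ofLp (p := 2) (X := Fin d → ℝ))) measurableSet_Ico

/-- **Extensivity of the free Fermi gas energy**: for a normalized `N`-body
state `Ψ` supported in the cube `Q₀` of side `L₀` (so `|Q₀|^{2/d} = L₀²`)
satisfying the local exclusion bound
`T^Q[Ψ] ≥ (π²/|Q|^{2/d})(∫_Q ϱ_Ψ − q)` on every sub-cube, partitioning `Q₀`
into `M^d` equal sub-cubes yields
`T[Ψ] ≥ (π²/|Q₀|^{2/d})(N M² − q M^{d+2})` for every `M ∈ ℕ`; consequently,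
for the optimal `M` (assumed integer, `M^d = 2N/((d+2)q)`),
`T[Ψ] ≥ c_d π² q^{-2/d} N^{1+2/d}/|Q₀|^{2/d}` with
`c_d = (d/(d+2))(2/(d+2))^{2/d}`. -/
theorem fermi_gas_extensivity (d N q : ℕ) (hd : 1 ≤ d) (hN : 1 ≤ N) (hq : 1 ≤ q)
    (Ψ : (Fin N → EuclideanSpace ℝ (Fin d)) → ℝ)
    (hΨ : Differentiable ℝ Ψ)
    (a : EuclideanSpace ℝ (Fin d)) (L₀ : ℝ) (hL₀ : 0 < L₀)
    (hsupp : ∀ x, Ψ x ≠ 0 → ∀ j, x j ∈ hCube a L₀)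
    (hnorm : (∫ x, (Ψ x) ^ 2) = 1)
    (hint : ∀ j : Fin N, Integrable (fun x => ‖gradPart Ψ x j‖ ^ 2))
    (hexcl : ∀ (c : EuclideanSpace ℝ (Fin d)) (ℓ : ℝ), 0 < ℓ →
      localKinetic Ψ c ℓ ≥ Real.pi ^ 2 / ℓ ^ 2 * (localMass Ψ c ℓ - q)) :
    (∀ M : ℕ, 1 ≤ M →
      (∑ j : Fin N, ∫ x, ‖gradPart Ψ x j‖ ^ 2) ≥
        Real.pi ^ 2 / L₀ ^ 2 *
          ((N : ℝ) * (M : ℝ) ^ 2 - (q : ℝ) * (M : ℝ) ^ (d + 2))) ∧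
    (∀ M : ℕ, 1 ≤ M → (M : ℝ) ^ d = 2 * (N : ℝ) / (((d : ℝ) + 2) * (q : ℝ)) →
      (∑ j : Fin N, ∫ x, ‖gradPart Ψ x j‖ ^ 2) ≥
        ((d : ℝ) / ((d : ℝ) + 2)) * (2 / ((d : ℝ) + 2)) ^ ((2 : ℝ) / d) *
          Real.pi ^ 2 * (q : ℝ) ^ (-(2 : ℝ) / d) *
          (N : ℝ) ^ ((1 : ℝ) + 2 / d) / L₀ ^ 2) := by
  classical
  have hΨ2 : Integrable (fun x => (Ψ x) ^ 2) := by
    by_contra h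
    rw [integral_undef h] at hnorm
    norm_num at hnorm
  have key_eq : ∀ (f : (Fin N → EuclideanSpace ℝ (Fin d)) → ℝ)
      (Q : Set (EuclideanSpace ℝ (Fin d))) (j : Fin N),
      (fun x => f x * Q.indicator (fun _ => (1:ℝ)) (x j))
        = Set.indicator ((fun x => x j) ⁻¹' Q) f := by
    intro f Q j; funext x
    by_cases hx : x j ∈ Q <;> simp [Set.indicator_apply, hx]
  have main : ∀ M : ℕ, 1 ≤ M →
      (∑ j : Fin N, ∫ x, ‖gradPart Ψ x j‖ ^ 2) ≥
        Real.pi ^ 2 / L₀ ^ 2 *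
          ((N : ℝ) * (M : ℝ) ^ 2 - (q : ℝ) * (M : ℝ) ^ (d + 2)) := by
    intro M hM
    have hM0 : (0:ℝ) < M := by exact_mod_cast hM
    set ℓ : ℝ := L₀ / M with hℓdef
    have hℓ : 0 < ℓ := div_pos hL₀ hM0
    have hMℓ : (M : ℝ) * ℓ = L₀ := by rw [hℓdef]; field_simp
    set c : (Fin d → Fin M) → EuclideanSpace ℝ (Fin d) :=
      fun k => WithLp.toLp 2 (fun i => a i + (k i : ℝ) * ℓ) with hc
    have hind : ∀ (k : Fin d → Fin M) (y : EuclideanSpace ℝ (Fin d)),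
        (hCube (c k) ℓ).indicator (fun _ => (1:ℝ)) y
          = ∏ i, (if y i ∈ Set.Ico (a i + (k i : ℝ) * ℓ) (a i + (k i : ℝ) * ℓ + ℓ)
              then (1:ℝ) else 0) := fun k y => fermi_cube_ind_eq a ℓ k y
    have hsum_le : ∀ y : EuclideanSpace ℝ (Fin d),
        ∑ k : Fin d → Fin M, (hCube (c k) ℓ).indicator (fun _ => (1:ℝ)) y ≤ 1 := by
      intro y
      have hswap := fermi_sum_prod_swap (fun i (m : Fin M) =>
        if y i ∈ Set.Ico (a i + (m:ℝ) * ℓ) (a i + (m:ℝ) * ℓ + ℓ) then (1:ℝ) else 0)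
      rw [Finset.sum_congr rfl (fun k _ => hind k y), hswap]
      apply Finset.prod_le_one
      · intro i _
        apply Finset.sum_nonneg
        intro m _; positivity
      · intro i _; exact fermi_oneD_le (a i) ℓ (y i) hℓ M
    have hsum_eq : ∀ y : EuclideanSpace ℝ (Fin d), y ∈ hCube a L₀ →
        ∑ k : Fin d → Fin M, (hCube (c k) ℓ).indicator (fun _ => (1:ℝ)) y = 1 := by
      intro y hy
      have hswap := fermi_sum_prod_swap (fun i (m : Fin M) =>
        if y i ∈ Set.Ico (a i + (m:ℝ) * ℓ) (a i + (m:ℝ) * ℓ + ℓ) then (1:ℝ) else 0)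
      rw [Finset.sum_congr rfl (fun k _ => hind k y), hswap]
      apply Finset.prod_eq_one
      intro i _
      refine fermi_oneD_eq (a i) ℓ (y i) hℓ M (hy i).1 ?_
      rw [hMℓ]; exact (hy i).2
    have hkin_int : ∀ (j : Fin N) (k : Fin d → Fin M),
        Integrable (fun x => ‖gradPart Ψ x j‖ ^ 2 *
          (hCube (c k) ℓ).indicator (fun _ => (1:ℝ)) (x j)) := by
      intro j k
      rw [key_eq]
      exact (hint j).indicator (measurable_pi_apply j (fermi_hCube_measurable (c k) ℓ))
    have hmass_int : ∀ (j : Fin N) (k : Fin d → Fin M),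
        Integrable (fun x => (Ψ x) ^ 2 *
          (hCube (c k) ℓ).indicator (fun _ => (1:ℝ)) (x j)) := by
      intro j k
      rw [key_eq]
      exact hΨ2.indicator (measurable_pi_apply j (fermi_hCube_measurable (c k) ℓ))
    have step1 : ∑ k : Fin d → Fin M, localKinetic Ψ (c k) ℓ ≤
        ∑ j : Fin N, ∫ x, ‖gradPart Ψ x j‖ ^ 2 := by
      unfold localKinetic
      rw [Finset.sum_comm]
      apply Finset.sum_le_sum
      intro j _
      rw [← integral_finset_sum _ (fun k _ => hkin_int j k)]
      apply integral_mono (integrable_finset_sum _ (fun k _ => hkin_int j k)) (hint j)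
      intro x
      show (∑ k : Fin d → Fin M, ‖gradPart Ψ x j‖ ^ 2 *
          (hCube (c k) ℓ).indicator (fun _ => (1:ℝ)) (x j)) ≤ ‖gradPart Ψ x j‖ ^ 2
      have : ∑ k : Fin d → Fin M, ‖gradPart Ψ x j‖ ^ 2 *
          (hCube (c k) ℓ).indicator (fun _ => (1:ℝ)) (x j)
          = ‖gradPart Ψ x j‖ ^ 2 *
            ∑ k : Fin d → Fin M, (hCube (c k) ℓ).indicator (fun _ => (1:ℝ)) (x j) := by
        rw [Finset.mul_sum]
      rw [this]
      calc ‖gradPart Ψ x j‖ ^ 2 * ∑ k : Fin d → Fin M,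
            (hCube (c k) ℓ).indicator (fun _ => (1:ℝ)) (x j)
          ≤ ‖gradPart Ψ x j‖ ^ 2 * 1 :=
            mul_le_mul_of_nonneg_left (hsum_le (x j)) (by positivity)
        _ = ‖gradPart Ψ x j‖ ^ 2 := mul_one _
    have step2 : ∑ k : Fin d → Fin M, localMass Ψ (c k) ℓ = N := by
      unfold localMass
      rw [Finset.sum_comm]
      have e : ∀ j : Fin N, (∑ k : Fin d → Fin M, ∫ x, (Ψ x) ^ 2 *
          (hCube (c k) ℓ).indicator (fun _ => (1:ℝ)) (x j)) = 1 := by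
        intro j
        rw [← integral_finset_sum _ (fun k _ => hmass_int j k)]
        have e0 : (fun x => ∑ k : Fin d → Fin M, (Ψ x) ^ 2 *
            (hCube (c k) ℓ).indicator (fun _ => (1:ℝ)) (x j)) = fun x => (Ψ x) ^ 2 := by
          funext x
          rw [← Finset.mul_sum]
          by_cases hx : Ψ x = 0
          · simp [hx]
          · rw [hsum_eq (x j) (hsupp x hx j), mul_one]
        rw [show (∫ x, ∑ k : Fin d → Fin M, (Ψ x) ^ 2 *
            (hCube (c k) ℓ).indicator (fun _ => (1:ℝ)) (x j)) = ∫ x, (Ψ x) ^ 2 from by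
          rw [e0]]
        exact hnorm
      rw [Finset.sum_congr rfl (fun j _ => e j)]
      simp
    have hcard : (Finset.univ : Finset (Fin d → Fin M)).card = M ^ d := by
      simp [Finset.card_univ]
    have step3 : Real.pi ^ 2 / ℓ ^ 2 * ((N : ℝ) - (q : ℝ) * (M : ℝ) ^ d) ≤
        ∑ k : Fin d → Fin M, localKinetic Ψ (c k) ℓ := by
      have h1 : ∑ k : Fin d → Fin M, Real.pi ^ 2 / ℓ ^ 2 * (localMass Ψ (c k) ℓ - q) ≤
          ∑ k : Fin d → Fin M, localKinetic Ψ (c k) ℓ :=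
        Finset.sum_le_sum (fun k _ => hexcl (c k) ℓ hℓ)
      refine le_trans (le_of_eq ?_) h1
      rw [← Finset.mul_sum, Finset.sum_sub_distrib, Finset.sum_const, step2, hcard]
      push_cast
      ring
    have hfin : Real.pi ^ 2 / ℓ ^ 2 * ((N : ℝ) - (q : ℝ) * (M : ℝ) ^ d) =
        Real.pi ^ 2 / L₀ ^ 2 *
          ((N : ℝ) * (M : ℝ) ^ 2 - (q : ℝ) * (M : ℝ) ^ (d + 2)) := by
      have : ((M : ℝ)) ^ (d + 2) = (M : ℝ) ^ d * (M : ℝ) ^ 2 := pow_add _ _ _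
      rw [this, hℓdef, div_pow]
      field_simp
    calc Real.pi ^ 2 / L₀ ^ 2 * ((N : ℝ) * (M : ℝ) ^ 2 - (q : ℝ) * (M : ℝ) ^ (d + 2))
        = Real.pi ^ 2 / ℓ ^ 2 * ((N : ℝ) - (q : ℝ) * (M : ℝ) ^ d) := hfin.symm
      _ ≤ ∑ k : Fin d → Fin M, localKinetic Ψ (c k) ℓ := step3
      _ ≤ ∑ j : Fin N, ∫ x, ‖gradPart Ψ x j‖ ^ 2 := step1
  refine ⟨main, ?_⟩
  intro M hM hMd
  have hd0 : (0:ℝ) < d := by exact_mod_cast hd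
  have hq0 : (0:ℝ) < q := by exact_mod_cast hq
  have hN0 : (0:ℝ) < N := by exact_mod_cast hN
  have hM0 : (0:ℝ) < M := by exact_mod_cast hM
  have hd2 : (0:ℝ) < (d:ℝ) + 2 := by linarith
  set r : ℝ := 2 / (d:ℝ) with hr
  set A : ℝ := (2 / ((d : ℝ) + 2)) ^ r with hA
  set B : ℝ := (N : ℝ) ^ r with hB
  set C : ℝ := (q : ℝ) ^ (-(2:ℝ) / d) with hC
  have hCval : C = ((q : ℝ) ^ r)⁻¹ := by
    rw [hC, neg_div, Real.rpow_neg hq0.le, hr]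
  have hM2 : (M:ℝ) ^ 2 = A * B * C := by
    have e1 : ((M:ℝ) ^ d) ^ r = (M:ℝ) ^ 2 := by
      rw [← Real.rpow_natCast (M:ℝ) d, ← Real.rpow_mul hM0.le]
      have : (d:ℝ) * r = 2 := by rw [hr]; field_simp
      rw [this]
      exact Real.rpow_two _ ▸ (Real.rpow_natCast (M:ℝ) 2)
    rw [← e1, hMd]
    have e2 : 2 * (N : ℝ) / (((d : ℝ) + 2) * (q : ℝ)) =
        (2 / ((d : ℝ) + 2)) * ((N : ℝ) * ((q : ℝ))⁻¹) := by
      field_simp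
    rw [e2, Real.mul_rpow (by positivity) (by positivity),
        Real.mul_rpow hN0.le (by positivity), Real.inv_rpow hq0.le, ← hCval]
    rw [hA, hB]; ring
  have hMd2 : (M:ℝ) ^ (d + 2) = (2 * (N : ℝ) / (((d : ℝ) + 2) * (q : ℝ))) * (A * B * C) := by
    rw [pow_add, hMd, hM2]
  have hN1 : (N : ℝ) ^ ((1:ℝ) + 2 / (d:ℝ)) = (N : ℝ) * B := by
    rw [Real.rpow_add hN0, Real.rpow_one, hB, hr]
  have heq : Real.pi ^ 2 / L₀ ^ 2 * ((N : ℝ) * (M : ℝ) ^ 2 - (q : ℝ) * (M : ℝ) ^ (d + 2)) =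
      ((d : ℝ) / ((d : ℝ) + 2)) * (2 / ((d : ℝ) + 2)) ^ ((2 : ℝ) / d) *
        Real.pi ^ 2 * (q : ℝ) ^ (-(2 : ℝ) / d) *
        (N : ℝ) ^ ((1 : ℝ) + 2 / d) / L₀ ^ 2 := by
    rw [hM2, hMd2, hN1, ← hA, ← hC]
    field_simp
    ring
  calc ((d : ℝ) / ((d : ℝ) + 2)) * (2 / ((d : ℝ) + 2)) ^ ((2 : ℝ) / d) *
        Real.pi ^ 2 * (q : ℝ) ^ (-(2 : ℝ) / d) *
        (N : ℝ) ^ ((1 : ℝ) + 2 / d) / L₀ ^ 2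
      = Real.pi ^ 2 / L₀ ^ 2 * ((N : ℝ) * (M : ℝ) ^ 2 - (q : ℝ) * (M : ℝ) ^ (d + 2)) := heq.symm
    _ ≤ ∑ j : Fin N, ∫ x, ‖gradPart Ψ x j‖ ^ 2 := main M hM
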